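/- Let G be a nut graph with vertex orbits V_1, …, V_k under Aut(G), and let x be a nonzero kernel vector of the adjacency matrix of G. Suppose every orbit V_ℓ is an independent set in G and the vertex-orbit graph of G is a cycle of odd length. Then for every orbit V_i the sum of the entries of x over V_i is zero; moreover, within each orbit V_i the number of vertices with positive entry equals the number with negative entry, and each orbit V_i has even size. -/

import Mathlib

namespace NutPaper

open Matrix

variable {V : Type*}

open scoped Classical in
/-- The real adjacency matrix of a simple graph. -/
noncomputable def adjMat (G : SimpleGraph V) : Matrix V V ℝ :=
  Matrix.of fun u v => if G.Adj u v then (1 : ℝ) else 0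

/-- A nut graph: the adjacency matrix has nullity exactly one, and every
nonzero kernel vector has all entries nonzero. -/
def IsNutGraph [Fintype V] (G : SimpleGraph V) : Prop :=
  Module.finrank ℝ (LinearMap.ker (Matrix.mulVecLin (adjMat G))) = 1 ∧
  ∀ x : V → ℝ, adjMat G *ᵥ x = 0 → x ≠ 0 → ∀ v, x v ≠ 0

/-- The orbit of a vertex under the full automorphism group. -/
def vertexOrbit (G : SimpleGraph V) (v : V) : Set V :=
  {u | ∃ α : G ≃g G, α v = u}

/-- The set of vertex orbits. -/
def vertexOrbits (G : SimpleGraph V) : Set (Set V) :=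
  Set.range (vertexOrbit G)

/-- The number of vertex orbits. -/
noncomputable def numVertexOrbits (G : SimpleGraph V) : ℕ :=
  Nat.card (vertexOrbits G)

/-- The orbit of an edge under the full automorphism group. -/
def edgeOrbit (G : SimpleGraph V) (e : Sym2 V) : Set (Sym2 V) :=
  {f | ∃ α : G ≃g G, Sym2.map (⇑α) e = f}

/-- The set of edge orbits. -/
def edgeOrbits (G : SimpleGraph V) : Set (Set (Sym2 V)) :=
  edgeOrbit G '' G.edgeSet

/-- The number of edge orbits. -/
noncomputable def numEdgeOrbits (G : SimpleGraph V) : ℕ :=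
  Nat.card (edgeOrbits G)


/-- The vertex-orbit graph of `G`: vertices are the vertex orbits of `G`, and
two distinct orbits are adjacent when some edge of `G` joins them. -/
def orbitGraph (G : SimpleGraph V) : SimpleGraph (vertexOrbits G) where
  Adj O₁ O₂ := O₁ ≠ O₂ ∧ ∃ u ∈ (O₁ : Set V), ∃ w ∈ (O₂ : Set V), G.Adj u w
  symm := by
    refine ⟨?_⟩
    rintro O₁ O₂ ⟨hne, u, hu, w, hw, h⟩
    exact ⟨hne.symm, w, hw, u, hu, h.symm⟩
  loopless := by
    refine ⟨?_⟩
    rintro O ⟨hne, -⟩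
    exact hne rfl

section Aux

open scoped Classical

open Fin.NatCast Fin.CommRing

variable {V : Type*}

lemma mem_vertexOrbit_self (G : SimpleGraph V) (v : V) : v ∈ vertexOrbit G v :=
  ⟨RelIso.refl _, rfl⟩

lemma vertexOrbit_eq_of_mem {G : SimpleGraph V} {u w : V} (h : u ∈ vertexOrbit G w) :
    vertexOrbit G u = vertexOrbit G w := by
  obtain ⟨β, hβ⟩ := h
  ext z
  constructor
  · rintro ⟨γ, rfl⟩
    exact ⟨β.trans γ, by simp [← hβ]⟩
  · rintro ⟨γ, rfl⟩
    exact ⟨β.symm.trans γ, by simp [← hβ]⟩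

lemma vertexOrbit_smul_mem {G : SimpleGraph V} (α : G ≃g G) {O : Set V}
    (hO : O ∈ vertexOrbits G) {v : V} (hv : v ∈ O) : α v ∈ O := by
  obtain ⟨w, rfl⟩ := hO
  obtain ⟨β, rfl⟩ := hv
  exact ⟨β.trans α, rfl⟩

lemma vertexOrbits_disjoint {G : SimpleGraph V} {O₁ O₂ : Set V}
    (h₁ : O₁ ∈ vertexOrbits G) (h₂ : O₂ ∈ vertexOrbits G) (hne : O₁ ≠ O₂) :
    Disjoint O₁ O₂ := by
  obtain ⟨w₁, rfl⟩ := h₁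
  obtain ⟨w₂, rfl⟩ := h₂
  rw [Set.disjoint_left]
  intro v hv₁ hv₂
  exact hne ((vertexOrbit_eq_of_mem hv₁).symm.trans (vertexOrbit_eq_of_mem hv₂))

lemma exists_auto_of_same_orbit {G : SimpleGraph V} {O : Set V}
    (hO : O ∈ vertexOrbits G) {u w : V} (hu : u ∈ O) (hw : w ∈ O) :
    ∃ α : G ≃g G, α u = w := by
  obtain ⟨z, rfl⟩ := hO
  obtain ⟨β, rfl⟩ := hu
  obtain ⟨γ, rfl⟩ := hw
  exact ⟨β.symm.trans γ, by simp⟩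

lemma ker_comp [Fintype V] {G : SimpleGraph V} {x : V → ℝ}
    (hker : adjMat G *ᵥ x = 0) (α : G ≃g G) :
    adjMat G *ᵥ (fun v => x (α v)) = 0 := by
  funext v
  have h := congrFun hker (α v)
  simp only [Matrix.mulVec, dotProduct, adjMat, Matrix.of_apply, Pi.zero_apply] at h ⊢
  rw [← Equiv.sum_comp α.toEquiv (fun u => (if G.Adj (α v) u then (1:ℝ) else 0) * x u)] at h
  simpa [α.map_adj_iff] using h

lemma abs_comp [Fintype V] {G : SimpleGraph V}
    (hrank : Module.finrank ℝ (LinearMap.ker (Matrix.mulVecLin (adjMat G))) = 1)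
    {x : V → ℝ} (hker : adjMat G *ᵥ x = 0) (hx : x ≠ 0) (α : G ≃g G) (v : V) :
    |x (α v)| = |x v| := by
  have hxmem : x ∈ LinearMap.ker (Matrix.mulVecLin (adjMat G)) := by
    simpa [Matrix.mulVecLin] using hker
  have hspan : Submodule.span ℝ {x} = LinearMap.ker (Matrix.mulVecLin (adjMat G)) := by
    apply Submodule.eq_of_le_of_finrank_le
    · rwa [Submodule.span_le, Set.singleton_subset_iff]
    · rw [hrank, finrank_span_singleton hx]
  have hymem : (fun v => x (α v)) ∈ LinearMap.ker (Matrix.mulVecLin (adjMat G)) := by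
    simpa [Matrix.mulVecLin] using ker_comp hker α
  rw [← hspan, Submodule.mem_span_singleton] at hymem
  obtain ⟨c, hc⟩ := hymem
  have hcx : ∀ u, x (α u) = c * x u := fun u => (congrFun hc u).symm
  set S := ∑ u, (x u)^2 with hS
  have hsq : ∑ u, (x (α u))^2 = S := Equiv.sum_comp α.toEquiv (fun u => (x u)^2)
  have hsum : ∑ u, (x (α u))^2 = c^2 * S := by
    rw [hS, Finset.mul_sum]
    exact Finset.sum_congr rfl (fun u _ => by rw [hcx u]; ring)
  have hpos : 0 < S := by
    obtain ⟨u, hu⟩ := Function.ne_iff.mp hx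
    exact Finset.sum_pos' (fun i _ => sq_nonneg _)
      ⟨u, Finset.mem_univ u, (sq_nonneg _).lt_of_ne' (pow_ne_zero 2 hu)⟩
  have h1 : (c^2 - 1) * S = 0 := by rw [sub_mul, one_mul]; linarith
  have hc2 : c^2 = 1 := by
    rcases mul_eq_zero.mp h1 with h | h
    · linarith
    · exact absurd h hpos.ne'
  have habs : |c| = 1 := by
    rcases abs_cases c with ⟨h, _⟩ | ⟨h, _⟩ <;> nlinarith
  rw [hcx v, abs_mul, habs, one_mul]

/-- number of neighbours of `u` inside `O` -/
noncomputable def nbrCount [Fintype V] (G : SimpleGraph V) (O : Set V) (u : V) : ℕ :=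
  (O.toFinset.filter (fun v => G.Adj u v)).card

lemma nbrCount_smul [Fintype V] {G : SimpleGraph V} {O : Set V}
    (hO : O ∈ vertexOrbits G) (α : G ≃g G) (u : V) :
    nbrCount G O (α u) = nbrCount G O u := by
  unfold nbrCount
  apply Finset.card_bij' (fun v _ => α.symm v) (fun v _ => α v)
  · intro v hv
    simp only [Finset.mem_filter, Set.mem_toFinset] at hv ⊢
    refine ⟨vertexOrbit_smul_mem α.symm hO hv.1, ?_⟩
    have := α.symm.map_adj_iff.mpr hv.2
    simpa using this
  · intro v hv
    simp only [Finset.mem_filter, Set.mem_toFinset] at hv ⊢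
    exact ⟨vertexOrbit_smul_mem α hO hv.1, α.map_adj_iff.mpr hv.2⟩
  · intro v _; simp
  · intro v _; simp

lemma nbrCount_const [Fintype V] {G : SimpleGraph V} {O O' : Set V}
    (hO : O ∈ vertexOrbits G) (hO' : O' ∈ vertexOrbits G) {u w : V}
    (hu : u ∈ O') (hw : w ∈ O') : nbrCount G O u = nbrCount G O w := by
  obtain ⟨α, rfl⟩ := exists_auto_of_same_orbit hO' hu hw
  exact (nbrCount_smul hO α u).symm

/-- The key linear relation between sums over the two neighbouring orbits. -/
lemma orbit_sum_relation [Fintype V] {G : SimpleGraph V}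
    {x : V → ℝ} (hker : adjMat G *ᵥ x = 0)
    {O A B : Set V} (hO : O ∈ vertexOrbits G) (hA : A ∈ vertexOrbits G)
    (hB : B ∈ vertexOrbits G) (hAB : Disjoint A B)
    (hcover : ∀ u : V, (∃ v ∈ O, G.Adj u v) → u ∈ A ∪ B)
    (ha : ∃ a ∈ A, ∃ v ∈ O, G.Adj a v) (hb : ∃ b ∈ B, ∃ v ∈ O, G.Adj b v) :
    ∃ ca cb : ℝ, 0 < ca ∧ 0 < cb ∧
      ca * (∑ v ∈ A.toFinset, x v) + cb * (∑ v ∈ B.toFinset, x v) = 0 := by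
  obtain ⟨a₀, ha₀, va, hva, hadja⟩ := ha
  obtain ⟨b₀, hb₀, vb, hvb, hadjb⟩ := hb
  refine ⟨(nbrCount G O a₀ : ℝ), (nbrCount G O b₀ : ℝ), ?_, ?_, ?_⟩
  · have : va ∈ O.toFinset.filter (fun v => G.Adj a₀ v) := by
      simp [Set.mem_toFinset, hva, hadja]
    exact_mod_cast Nat.pos_of_ne_zero (fun h => by
      simp [nbrCount, Finset.card_eq_zero] at h
      exact absurd this (by simp [h]; exact fun hv => h hv))
  · have : vb ∈ O.toFinset.filter (fun v => G.Adj b₀ v) := by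
      simp [Set.mem_toFinset, hvb, hadjb]
    exact_mod_cast Nat.pos_of_ne_zero (fun h => by
      simp [nbrCount, Finset.card_eq_zero] at h
      exact absurd this (by simp [h]; exact fun hv => h hv))
  · have h0 : ∑ v ∈ O.toFinset, (adjMat G *ᵥ x) v = 0 := by
      rw [hker]; simp
    have h1 : ∑ v ∈ O.toFinset, (adjMat G *ᵥ x) v
        = ∑ u : V, (nbrCount G O u : ℝ) * x u := by
      simp only [Matrix.mulVec, dotProduct, adjMat, Matrix.of_apply]
      rw [Finset.sum_comm]
      refine Finset.sum_congr rfl (fun u _ => ?_)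
      rw [← Finset.sum_mul]
      congr 1
      have hflt : (Finset.filter (fun v => G.Adj v u) O.toFinset)
          = (Finset.filter (fun v => G.Adj u v) O.toFinset) := by
        ext v
        simp only [Finset.mem_filter, and_congr_right_iff]
        intro _
        exact G.adj_comm v u
      rw [Finset.sum_boole, nbrCount, hflt]
    have hvan : ∀ u : V, u ∉ A.toFinset ∪ B.toFinset → (nbrCount G O u : ℝ) * x u = 0 := by
      intro u hu
      have : nbrCount G O u = 0 := by
        rw [nbrCount, Finset.card_eq_zero, Finset.filter_eq_empty_iff]
        intro v hv hadj
        have h' := hcover u ⟨v, Set.mem_toFinset.mp hv, hadj⟩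
        rw [Finset.mem_union, Set.mem_toFinset, Set.mem_toFinset] at hu
        exact hu h'
      rw [this]
      norm_num
    have h2 : ∑ u : V, (nbrCount G O u : ℝ) * x u
        = ∑ u ∈ A.toFinset ∪ B.toFinset, (nbrCount G O u : ℝ) * x u :=
      (Finset.sum_subset (Finset.subset_univ _) (fun u _ hu => hvan u hu)).symm
    have hdisj : Disjoint A.toFinset B.toFinset := by
      rw [Set.disjoint_toFinset]; exact hAB
    have h3 : ∑ u ∈ A.toFinset ∪ B.toFinset, (nbrCount G O u : ℝ) * x u
        = ∑ u ∈ A.toFinset, (nbrCount G O u : ℝ) * x u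
          + ∑ u ∈ B.toFinset, (nbrCount G O u : ℝ) * x u :=
      Finset.sum_union hdisj
    have h4 : ∑ u ∈ A.toFinset, (nbrCount G O u : ℝ) * x u
        = (nbrCount G O a₀ : ℝ) * ∑ u ∈ A.toFinset, x u := by
      rw [Finset.mul_sum]
      refine Finset.sum_congr rfl (fun u hu => ?_)
      rw [nbrCount_const hO hA (Set.mem_toFinset.mp hu) ha₀]
    have h5 : ∑ u ∈ B.toFinset, (nbrCount G O u : ℝ) * x u
        = (nbrCount G O b₀ : ℝ) * ∑ u ∈ B.toFinset, x u := by
      rw [Finset.mul_sum]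
      refine Finset.sum_congr rfl (fun u hu => ?_)
      rw [nbrCount_const hO hB (Set.mem_toFinset.mp hu) hb₀]
    rw [← h4, ← h5, ← h3, ← h2, ← h1]
    exact h0

/-- Values with a positive second-neighbour relation around an odd cycle vanish. -/
lemma cycle_recursion {n : ℕ} [NeZero n] (hodd : Odd n) (s : Fin n → ℝ)
    (hrel : ∀ k : Fin n, ∃ a b : ℝ, 0 < a ∧ 0 < b ∧ a * s (k - 1) + b * s (k + 1) = 0) :
    ∀ k, s k = 0 := by
  intro k
  have key : ∀ j : ℕ, ∃ r : ℝ, 0 < r ∧ s (k + 2 * (j : Fin n)) = (-1)^j * r * s k := by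
    intro j
    induction j with
    | zero => exact ⟨1, one_pos, by norm_num⟩
    | succ j ih =>
      obtain ⟨r, hr, hs⟩ := ih
      obtain ⟨a, b, ha, hb, hab⟩ := hrel (k + 2 * (j : Fin n) + 1)
      have e1 : k + 2 * (j : Fin n) + 1 - 1 = k + 2 * (j : Fin n) := by ring
      have e2 : k + 2 * (j : Fin n) + 1 + 1 = k + 2 * ((j+1 : ℕ) : Fin n) := by
        push_cast; ring
      rw [e1, e2] at hab
      refine ⟨(a / b) * r, by positivity, ?_⟩
      have : s (k + 2 * ((j+1 : ℕ) : Fin n)) = -(a/b) * s (k + 2 * (j : Fin n)) := by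
        field_simp
        push_cast at hab ⊢
        linarith
      rw [this, hs]
      ring
  obtain ⟨r, hr, hs⟩ := key n
  rw [Fin.natCast_self, mul_zero, add_zero, Odd.neg_one_pow hodd] at hs
  nlinarith [hs, hr]

lemma cycleGraph_adj_pred {n : ℕ} [NeZero n] (hn3 : 3 ≤ n) (k : Fin n) :
    (SimpleGraph.cycleGraph n).Adj (k - 1) k := by
  rw [SimpleGraph.cycleGraph_adj']
  right
  rw [show k - (k - 1) = 1 by ring, Fin.val_one', Nat.mod_eq_of_lt (by omega)]

lemma cycleGraph_adj_succ {n : ℕ} [NeZero n] (hn3 : 3 ≤ n) (k : Fin n) :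
    (SimpleGraph.cycleGraph n).Adj (k + 1) k := by
  rw [SimpleGraph.cycleGraph_adj']
  left
  rw [show k + 1 - k = 1 by ring, Fin.val_one', Nat.mod_eq_of_lt (by omega)]

lemma cycleGraph_adj_classify {n : ℕ} [NeZero n] (hn3 : 3 ≤ n) {j k : Fin n}
    (h : (SimpleGraph.cycleGraph n).Adj j k) : j = k - 1 ∨ j = k + 1 := by
  rw [SimpleGraph.cycleGraph_adj'] at h
  have h1 : ((1 : Fin n) : ℕ) = 1 := by
    rw [Fin.val_one', Nat.mod_eq_of_lt (by omega)]
  rcases h with h | h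
  · right
    have : j - k = 1 := Fin.ext (by rw [h, h1])
    have := sub_eq_iff_eq_add.mp this
    rw [this]; ring
  · left
    have : k - j = 1 := Fin.ext (by rw [h, h1])
    have hk : k = 1 + j := sub_eq_iff_eq_add.mp this
    rw [hk]; ring

end Aux

/-- If every vertex orbit of a nut graph is an independent set
and the vertex-orbit graph is a cycle of odd length, then the kernel-vector
entries sum to zero over every vertex orbit; moreover each orbit has as many
positive as negative entries, and hence even size. -/
theorem nut_oddCycle_orbit_sums_zero {V : Type*} [Fintype V]
    (G : SimpleGraph V)
    (hnut : IsNutGraph G)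
    (x : V → ℝ) (hker : adjMat G *ᵥ x = 0) (hx : x ≠ 0)
    (hindep : ∀ O ∈ vertexOrbits G, ∀ u ∈ O, ∀ w ∈ O, ¬ G.Adj u w)
    (hcycle : ∃ n : ℕ, Odd n ∧ 3 ≤ n ∧
      Nonempty (orbitGraph G ≃g SimpleGraph.cycleGraph n)) :
    ∀ Oi ∈ vertexOrbits G,
      (∑ᶠ v ∈ Oi, x v = 0) ∧
      Nat.card {v : V | v ∈ Oi ∧ 0 < x v} = Nat.card {v : V | v ∈ Oi ∧ x v < 0} ∧
      Even (Nat.card Oi) := by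
  classical
  intro Oi hOi
  obtain ⟨n, hodd, hn3, ⟨e⟩⟩ := hcycle
  haveI : NeZero n := ⟨by omega⟩
  obtain ⟨hrank, hnz⟩ := hnut
  set Os : Fin n → Set V := fun k => ((e.symm k : vertexOrbits G) : Set V) with hOsdef
  have hOs_apply : ∀ k, Os k = ((e.symm k : vertexOrbits G) : Set V) := fun k => rfl
  have hOsmem : ∀ k, Os k ∈ vertexOrbits G := fun k => (e.symm k).2
  have hOs_inj : Function.Injective Os := fun a b h =>
    e.symm.toEquiv.injective (Subtype.ext h)
  set s : Fin n → ℝ := fun k => ∑ v ∈ (Os k).toFinset, x v with hsdef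
  have horb_adj : ∀ j k : Fin n, (SimpleGraph.cycleGraph n).Adj j k →
      ∃ a ∈ Os j, ∃ v ∈ Os k, G.Adj a v := by
    intro j k h
    have h' : (orbitGraph G).Adj (e.symm j) (e.symm k) := e.symm.map_adj_iff.mpr h
    obtain ⟨-, a, haa, v, hv, hadj⟩ := h'
    exact ⟨a, by rwa [hOs_apply], v, by rwa [hOs_apply], hadj⟩
  have hcover : ∀ k : Fin n, ∀ u : V,
      (∃ v ∈ Os k, G.Adj u v) → u ∈ Os (k - 1) ∪ Os (k + 1) := by
    rintro k u ⟨v, hv, hadj⟩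
    set Ou : vertexOrbits G := ⟨vertexOrbit G u, ⟨u, rfl⟩⟩ with hOu
    set j := e Ou with hj
    have hju : u ∈ Os j := by
      rw [hOs_apply, hj, e.symm_apply_apply]
      exact mem_vertexOrbit_self G u
    by_cases hjk : j = k
    · exact absurd hadj (hindep (Os k) (hOsmem k) u (hjk ▸ hju) v hv)
    · have hne : e.symm j ≠ e.symm k := fun h => hjk (e.symm.toEquiv.injective h)
      have hadjo : (orbitGraph G).Adj (e.symm j) (e.symm k) :=
        ⟨hne, u, by rwa [← hOs_apply], v, by rwa [← hOs_apply], hadj⟩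
      have hcyc : (SimpleGraph.cycleGraph n).Adj j k := e.symm.map_adj_iff.mp hadjo
      rcases cycleGraph_adj_classify hn3 hcyc with h | h
      · exact Or.inl (h ▸ hju)
      · exact Or.inr (h ▸ hju)
  have hrel : ∀ k : Fin n, ∃ a b : ℝ, 0 < a ∧ 0 < b ∧ a * s (k - 1) + b * s (k + 1) = 0 := by
    intro k
    have hne2 : k - 1 ≠ k + 1 := by
      intro h
      open Fin.NatCast Fin.CommRing in
      have h2 : ((2 : ℕ) : Fin n) = 0 := by push_cast; linear_combination -h
      rw [Fin.natCast_eq_zero] at h2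
      have := Nat.le_of_dvd (by norm_num) h2
      omega
    exact orbit_sum_relation hker (hOsmem k) (hOsmem (k - 1)) (hOsmem (k + 1))
      (vertexOrbits_disjoint (hOsmem _) (hOsmem _) (hOs_inj.ne hne2))
      (hcover k)
      (horb_adj _ _ (cycleGraph_adj_pred hn3 k))
      (horb_adj _ _ (cycleGraph_adj_succ hn3 k))
  have hszero : ∀ k, s k = 0 := cycle_recursion hodd s hrel
  set i := e ⟨Oi, hOi⟩ with hi
  have hOieq : Os i = Oi := by
    rw [hOs_apply, hi, e.symm_apply_apply]
  have hsum0 : ∑ v ∈ Oi.toFinset, x v = 0 := by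
    rw [← hOieq]; exact hszero i
  obtain ⟨z, hz⟩ : ∃ z, z ∈ Oi := by
    obtain ⟨z, rfl⟩ := hOi
    exact ⟨z, mem_vertexOrbit_self G z⟩
  have habsc : ∀ v ∈ Oi, |x v| = |x z| := by
    intro v hv
    obtain ⟨α, rfl⟩ := exists_auto_of_same_orbit hOi hz hv
    exact abs_comp hrank hker hx α z
  set m := |x z| with hm
  have hmpos : 0 < m := abs_pos.mpr (hnz x hker hx z)
  set P := Oi.toFinset.filter (fun v => 0 < x v) with hP
  set N := Oi.toFinset.filter (fun v => x v < 0) with hN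
  have hPN : P ∪ N = Oi.toFinset := by
    ext v
    simp only [hP, hN, Finset.mem_union, Finset.mem_filter]
    constructor
    · rintro (⟨h, -⟩ | ⟨h, -⟩) <;> exact h
    · intro h
      rcases (hnz x hker hx v).lt_or_gt with h' | h'
      · exact Or.inr ⟨h, h'⟩
      · exact Or.inl ⟨h, h'⟩
  have hdisjPN : Disjoint P N := by
    rw [Finset.disjoint_left]
    intro v hvP hvN
    simp only [hP, hN, Finset.mem_filter] at hvP hvN
    linarith [hvP.2, hvN.2]
  have hsplit : ∑ v ∈ Oi.toFinset, x v = ∑ v ∈ P, x v + ∑ v ∈ N, x v := by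
    rw [← hPN, Finset.sum_union hdisjPN]
  have hPsum : ∑ v ∈ P, x v = (P.card : ℝ) * m := by
    have hval : ∀ v ∈ P, x v = m := by
      intro v hv
      simp only [hP, Finset.mem_filter, Set.mem_toFinset] at hv
      rw [← abs_of_pos hv.2, habsc v hv.1]
    rw [Finset.sum_congr rfl hval, Finset.sum_const, nsmul_eq_mul]
  have hNsum : ∑ v ∈ N, x v = -((N.card : ℝ) * m) := by
    have hval : ∀ v ∈ N, x v = -m := by
      intro v hv
      simp only [hN, Finset.mem_filter, Set.mem_toFinset] at hv
      have h1 := habsc v hv.1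
      rw [abs_of_neg hv.2] at h1
      linarith
    rw [Finset.sum_congr rfl hval, Finset.sum_const, nsmul_eq_mul]
    ring
  have hcardeq : P.card = N.card := by
    have hmm : (P.card : ℝ) * m = (N.card : ℝ) * m := by
      rw [hsplit, hPsum, hNsum] at hsum0
      linarith
    exact_mod_cast mul_right_cancel₀ hmpos.ne' hmm
  refine ⟨?_, ?_, ?_⟩
  · rw [← Set.coe_toFinset Oi, finsum_mem_coe_finset]
    exact hsum0
  · have hPset : {v : V | v ∈ Oi ∧ 0 < x v} = ↑P := by
      ext v; simp [hP, Set.mem_toFinset]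
    have hNset : {v : V | v ∈ Oi ∧ x v < 0} = ↑N := by
      ext v; simp [hN, Set.mem_toFinset]
    rw [hPset, hNset, Nat.card_coe_set_eq, Nat.card_coe_set_eq,
      Set.ncard_coe_finset, Set.ncard_coe_finset]
    exact hcardeq
  · have hc : Nat.card Oi = P.card + N.card := by
      rw [Nat.card_coe_set_eq, Set.ncard_eq_toFinset_card', ← hPN,
        Finset.card_union_of_disjoint hdisjPN]
    rw [hc, hcardeq]
    exact Even.add_self _


end NutPaper
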